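/- (Multivariate interval type local limit theorem.) Let μₙ be probability measures on grids 𝒢ₙ = vₙ + wₙ∘ℤ^d in ℝ^d with widths wₙ ∈ ℝ^d_{>0}, wₙ → 0 componentwise, satisfying sup_{x∈𝒢ₙ} |μₙ({x})/w̄ₙ − f(x)| → 0 where w̄ₙ = ∏_δ w_{ₙ,δ} and f is a continuous probability density on ℝ^d. Let [a,b] be a non-degenerate compact d-dimensional interval on which f ≥ c > 0, and let mₙ ∈ ℝ^d_{>0} satisfy m_{ₙ,δ}/w_{ₙ,δ} → ∞ for each coordinate δ. Then sup over all d-dimensional intervals I ⊆ [a,b] with |I| ≥ mₙ componentwise of |μₙ(I)/μ(I) − 1| → 0, where μ = f·λ^d. -/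

import Mathlib

open MeasureTheory Filter Topology

private lemma aux_card_Icc (s e : ℤ) (h : s ≤ e + 1) :
    ((Finset.Icc s e).card : ℝ) = (e : ℝ) + 1 - (s : ℝ) := by
  rw [Int.card_Icc]
  have h0 : (0:ℤ) ≤ e + 1 - s := by omega
  have h1 : ((e + 1 - s).toNat : ℤ) = e + 1 - s := Int.toNat_of_nonneg h0
  exact_mod_cast congrArg (fun z : ℤ => (z : ℝ)) h1

private lemma aux_t (d : ℕ) {η : ℝ} (hη : 0 < η) :
    ∃ t : ℝ, 0 < t ∧ t ≤ 1/6 ∧ (1+2*t)^d ≤ 2 ∧ (1+2*t)^d - (1-3*t)^d ≤ η := by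
  have hc1 : ContinuousAt (fun t : ℝ => (1+2*t)^d - (1-3*t)^d) 0 := by fun_prop
  have hc2 : ContinuousAt (fun t : ℝ => (1+2*t)^d) 0 := by fun_prop
  have h1 : ∀ᶠ t : ℝ in 𝓝 0, (1+2*t)^d - (1-3*t)^d < η := by
    have ht := hc1.tendsto
    simp only [mul_zero, add_zero, sub_zero, one_pow, sub_self] at ht
    exact ht.eventually_lt_const hη
  have h2 : ∀ᶠ t : ℝ in 𝓝 0, (1+2*t)^d < 2 := by
    have ht := hc2.tendsto
    simp only [mul_zero, add_zero, one_pow] at ht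
    exact ht.eventually_lt_const one_lt_two
  have h3 : ∀ᶠ t : ℝ in 𝓝 0, t < 1/6 :=
    Filter.eventually_of_mem (Iio_mem_nhds (by norm_num)) fun t ht => ht
  obtain ⟨r, hr, hball⟩ := Metric.eventually_nhds_iff.mp ((h1.and h2).and h3)
  have hd : dist (r/2) (0:ℝ) < r := by
    rw [Real.dist_eq, sub_zero, abs_of_pos (by positivity)]; linarith
  have hP := hball hd
  exact ⟨r/2, by positivity, hP.2.le, hP.1.2.le, hP.1.1.le⟩


set_option maxHeartbeats 2000000 in
/-- Multivariate interval type local limit theorem: if `μₙ` lives on the grid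
`𝒢ₙ = vₙ + wₙ∘ℤ^d` with widths `wₙ → 0`, the local limit theorem
`sup_{x∈𝒢ₙ} |μₙ({x})/w̄ₙ − f(x)| → 0` holds with `f` a continuous probability density,
`f ≥ c > 0` on a non-degenerate compact interval `[a,b]`, and `m_{n,δ}/w_{n,δ} → ∞` in
each coordinate, then `μₙ(I)/μ(I) → 1` uniformly over `d`-dimensional intervals
`I ⊆ [a,b]` with `|I| ≥ mₙ` componentwise, where `μ = f·λ^d`. -/
theorem stmt_9 (d : ℕ) (hd : 0 < d)
    (v w : ℕ → Fin d → ℝ) (hw : ∀ n δ, 0 < w n δ)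
    (hw0 : ∀ δ, Tendsto (fun n => w n δ) atTop (𝓝 0))
    (μn : ℕ → Measure (Fin d → ℝ)) [∀ n, IsProbabilityMeasure (μn n)]
    (hsupp : ∀ n, (μn n) {x : Fin d → ℝ | ∃ k : Fin d → ℤ, ∀ δ, x δ = v n δ + w n δ * k δ}ᶜ = 0)
    (f : (Fin d → ℝ) → ℝ) (hf_cont : Continuous f) (hf_nonneg : ∀ x, 0 ≤ f x)
    (hf_int : Integrable f) (hf_one : ∫ x, f x = 1)
    (a b : Fin d → ℝ) (hab : ∀ δ, a δ < b δ)
    (c : ℝ) (hc : 0 < c) (hfc : ∀ x ∈ Set.Icc a b, c ≤ f x)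
    (hLLT : ∀ ε > 0, ∃ N : ℕ, ∀ n ≥ N, ∀ k : Fin d → ℤ,
      |((μn n) {fun δ => v n δ + w n δ * (k δ : ℝ)}).toReal / (∏ δ, w n δ) -
        f (fun δ => v n δ + w n δ * (k δ : ℝ))| < ε)
    (m : ℕ → Fin d → ℝ) (hm : ∀ n δ, 0 < m n δ)
    (hmw : ∀ δ, Tendsto (fun n => m n δ / w n δ) atTop atTop) :
    ∀ ε > 0, ∃ N : ℕ, ∀ n ≥ N, ∀ S : Fin d → Set ℝ,
      (∀ δ, S δ ⊆ Set.Icc (a δ) (b δ)) → (∀ δ, (S δ).OrdConnected) →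
      (∀ δ, MeasurableSet (S δ)) → (∀ δ, ENNReal.ofReal (m n δ) ≤ volume (S δ)) →
      |((μn n) (Set.univ.pi S)).toReal / (∫ x in Set.univ.pi S, f x) - 1| < ε := by
  intro ε hε
  classical
  -- big compact set and sup bound
  set T : Set (Fin d → ℝ) := Set.Icc (fun δ => a δ - 1) (fun δ => b δ + 1) with hT_def
  have hTcomp : IsCompact T := isCompact_Icc
  have hTne : T.Nonempty := by
    refine Set.nonempty_Icc.mpr fun δ => ?_
    have := (hab δ).le
    dsimp only
    linarith
  have hmemT : ∀ x : Fin d → ℝ, (∀ δ, a δ - 1 ≤ x δ ∧ x δ ≤ b δ + 1) → x ∈ T :=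
    fun x hx => ⟨fun δ => (hx δ).1, fun δ => (hx δ).2⟩
  obtain ⟨M₀, hM₀⟩ : ∃ M₀, ∀ x ∈ T, f x ≤ M₀ := by
    obtain ⟨x₀, _, hmax⟩ := hTcomp.exists_isMaxOn hTne hf_cont.continuousOn
    exact ⟨f x₀, hmax⟩
  set M : ℝ := max M₀ 1 with hM_def
  have hM1 : (1:ℝ) ≤ M := le_max_right _ _
  have hMpos : (0:ℝ) < M := lt_of_lt_of_le one_pos hM1
  have hfM : ∀ x ∈ T, f x ≤ M := fun x hx => (hM₀ x hx).trans (le_max_left _ _)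
  set η : ℝ := c * ε / 2 with hη_def
  have hηpos : 0 < η := by positivity
  -- uniform continuity on T
  obtain ⟨δ₀, hδ₀pos, hδ₀⟩ :=
    Metric.uniformContinuousOn_iff.mp
      (hTcomp.uniformContinuousOn_of_continuous hf_cont.continuousOn) (η/8) (by positivity)
  set w₀ : ℝ := min 1 (δ₀/2) with hw₀_def
  have hw₀pos : 0 < w₀ := lt_min one_pos (by positivity)
  have hw₀le1 : w₀ ≤ 1 := min_le_left _ _
  have hw₀ltδ : w₀ < δ₀ := lt_of_le_of_lt (min_le_right _ _) (by linarith)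
  -- the small ratio t'
  obtain ⟨t', ht'pos, ht'16, ht'2, ht'η⟩ := aux_t d (show 0 < η/(2*M) by positivity)
  set R : ℝ := max 3 (1/t') with hR_def
  obtain ⟨N₁, hN₁⟩ := hLLT (η/8) (by positivity)
  have hev1 : ∀ᶠ n in atTop, ∀ δ, w n δ ≤ w₀ := by
    rw [eventually_all]
    exact fun δ => ((hw0 δ).eventually_lt_const hw₀pos).mono fun n h => h.le
  have hev2 : ∀ᶠ n in atTop, ∀ δ, R ≤ m n δ / w n δ := by
    rw [eventually_all]
    exact fun δ => (hmw δ).eventually_ge_atTop R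
  obtain ⟨N₂, hN₂⟩ := Filter.eventually_atTop.mp (hev1.and hev2)
  refine ⟨max N₁ N₂, fun n hn S hS hSo hSm hSv => ?_⟩
  have hLn := hN₁ n (le_trans (le_max_left _ _) hn)
  obtain ⟨hwn, hmn⟩ := hN₂ n (le_trans (le_max_right _ _) hn)
  -- reduce to boxes
  have hSne : ∀ δ, (S δ).Nonempty := by
    intro δ
    rw [Set.nonempty_iff_ne_empty]
    intro h
    have h2 := hSv δ
    rw [h, measure_empty, nonpos_iff_eq_zero, ENNReal.ofReal_eq_zero] at h2
    exact absurd h2 (not_le.mpr (hm n δ))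
  have hbddA : ∀ δ, BddAbove (S δ) := fun δ => ⟨b δ, fun x hx => (hS δ hx).2⟩
  have hbddB : ∀ δ, BddBelow (S δ) := fun δ => ⟨a δ, fun x hx => (hS δ hx).1⟩
  set α : Fin d → ℝ := fun δ => sInf (S δ) with hα_def
  set β : Fin d → ℝ := fun δ => sSup (S δ) with hβ_def
  have hαa : ∀ δ, a δ ≤ α δ := fun δ => le_csInf (hSne δ) fun x hx => (hS δ hx).1
  have hβb : ∀ δ, β δ ≤ b δ := fun δ => csSup_le (hSne δ) fun x hx => (hS δ hx).2
  have hSIcc : ∀ δ, S δ ⊆ Set.Icc (α δ) (β δ) :=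
    fun δ x hx => ⟨csInf_le (hbddB δ) hx, le_csSup (hbddA δ) hx⟩
  have hIooS : ∀ δ, Set.Ioo (α δ) (β δ) ⊆ S δ := by
    intro δ x hx
    obtain ⟨s, hs, hsx⟩ := exists_lt_of_csInf_lt (hSne δ) hx.1
    obtain ⟨u, hu, hxu⟩ := exists_lt_of_lt_csSup (hSne δ) hx.2
    exact (hSo δ).out hs hu ⟨hsx.le, hxu.le⟩
  set L : Fin d → ℝ := fun δ => β δ - α δ with hL_def
  have hLm : ∀ δ, m n δ ≤ L δ := by
    intro δ
    have h1 : ENNReal.ofReal (m n δ) ≤ ENNReal.ofReal (β δ - α δ) :=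
      (hSv δ).trans (by rw [← Real.volume_Icc]; exact measure_mono (hSIcc δ))
    by_contra hcon
    push_neg at hcon
    exact absurd h1 (not_le.mpr ((ENNReal.ofReal_lt_ofReal_iff (hm n δ)).mpr hcon))
  have hLpos : ∀ δ, 0 < L δ := fun δ => lt_of_lt_of_le (hm n δ) (hLm δ)
  set B : Set (Fin d → ℝ) := Set.univ.pi fun δ => Set.Icc (α δ) (β δ) with hB_def
  set B' : Set (Fin d → ℝ) := Set.univ.pi fun δ => Set.Ioo (α δ) (β δ) with hB'_def
  have hBmeas : MeasurableSet B := MeasurableSet.univ_pi fun δ => measurableSet_Icc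
  have hB'meas : MeasurableSet B' := MeasurableSet.univ_pi fun δ => measurableSet_Ioo
  have hB'S : B' ⊆ Set.univ.pi S := Set.pi_mono fun δ _ => hIooS δ
  have hSB : Set.univ.pi S ⊆ B := Set.pi_mono fun δ _ => hSIcc δ
  have hB'B : B' ⊆ B := Set.pi_mono fun δ _ => Set.Ioo_subset_Icc_self
  have hvolB : volume B = ∏ δ, ENNReal.ofReal (L δ) := by
    rw [hB_def, volume_pi_pi]
    exact Finset.prod_congr rfl fun δ _ => Real.volume_Icc
  have hvolB' : volume B' = ∏ δ, ENNReal.ofReal (L δ) := by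
    rw [hB'_def, volume_pi_pi]
    exact Finset.prod_congr rfl fun δ _ => Real.volume_Ioo
  have hvolne : (∏ δ, ENNReal.ofReal (L δ)) ≠ ⊤ :=
    ENNReal.prod_ne_top fun δ _ => ENNReal.ofReal_ne_top
  have hSaeB : Set.univ.pi S =ᵐ[volume] B := by
    have hd0 : volume (B \ B') = 0 := by
      rw [measure_diff hB'B hB'meas.nullMeasurableSet (by rw [hvolB']; exact hvolne),
        hvolB, hvolB', tsub_self]
    refine (MeasureTheory.ae_eq_set).mpr ⟨?_, ?_⟩
    · rw [Set.diff_eq_empty.mpr hSB]; simp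
    · exact measure_mono_null (Set.diff_subset_diff_right hB'S) hd0
  have hint_eq : ∫ x in Set.univ.pi S, f x = ∫ x in B, f x := setIntegral_congr_set hSaeB
  set A : ℝ := ∫ x in B, f x with hA_def
  set VB : ℝ := ∏ δ, L δ with hVB_def
  have hVBpos : 0 < VB := Finset.prod_pos fun δ _ => hLpos δ
  have hvolBtoReal : (volume B).toReal = VB := by
    rw [hvolB, ENNReal.toReal_prod]
    exact Finset.prod_congr rfl fun δ _ => ENNReal.toReal_ofReal (hLpos δ).le
  have hBsubIcc : B ⊆ Set.Icc a b := by
    intro x hx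
    exact ⟨fun δ => (hαa δ).trans (hx δ (Set.mem_univ δ)).1,
      fun δ => (hx δ (Set.mem_univ δ)).2.trans (hβb δ)⟩
  have hBT : B ⊆ T := fun x hx => hmemT x fun δ => by
    have h1 := (hBsubIcc hx).1 δ
    have h2 := (hBsubIcc hx).2 δ
    constructor <;> linarith
  have hcA : c * VB ≤ A := by
    have h := setIntegral_ge_of_const_le_real hBmeas (by rw [hvolB]; exact hvolne)
      (fun x hx => hfc x (hBsubIcc hx)) hf_int.integrableOn
    rwa [measureReal_def, hvolBtoReal] at h
  have hApos : 0 < A := lt_of_lt_of_le (by positivity) hcA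
  -- grid points
  set gp : (Fin d → ℤ) → Fin d → ℝ := fun k δ => v n δ + w n δ * (k δ : ℝ) with hgp_def
  set W : ℝ := ∏ δ, w n δ with hW_def
  have hWpos : 0 < W := Finset.prod_pos fun δ _ => hw n δ
  set p : Fin d → ℤ := fun δ => ⌈(α δ - v n δ)/(w n δ)⌉ with hp_def
  set q : Fin d → ℤ := fun δ => ⌊(β δ - v n δ)/(w n δ)⌋ with hq_def
  have hp1 : ∀ δ, α δ - v n δ ≤ w n δ * (p δ : ℝ) := by
    intro δ
    have h := Int.le_ceil ((α δ - v n δ)/(w n δ))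
    have h2 := mul_le_mul_of_nonneg_left h (hw n δ).le
    rwa [mul_div_cancel₀ _ (hw n δ).ne'] at h2
  have hp2 : ∀ δ, w n δ * (p δ : ℝ) < α δ - v n δ + w n δ := by
    intro δ
    have h := Int.ceil_lt_add_one ((α δ - v n δ)/(w n δ))
    have h2 := mul_lt_mul_of_pos_left h (hw n δ)
    rw [mul_add, mul_one, mul_div_cancel₀ _ (hw n δ).ne'] at h2
    simpa [hp_def] using h2
  have hq1 : ∀ δ, w n δ * (q δ : ℝ) ≤ β δ - v n δ := by
    intro δ
    have h := Int.floor_le ((β δ - v n δ)/(w n δ))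
    have h2 := mul_le_mul_of_nonneg_left h (hw n δ).le
    rwa [mul_div_cancel₀ _ (hw n δ).ne'] at h2
  have hq2 : ∀ δ, β δ - v n δ - w n δ < w n δ * (q δ : ℝ) := by
    intro δ
    have h := Int.sub_one_lt_floor ((β δ - v n δ)/(w n δ))
    have h2 := mul_lt_mul_of_pos_left h (hw n δ)
    rw [mul_sub, mul_one, mul_div_cancel₀ _ (hw n δ).ne'] at h2
    simpa [hq_def] using h2
  have hwt : ∀ δ, w n δ ≤ t' * L δ := by
    intro δ
    have h1 : 1/t' ≤ m n δ / w n δ := le_trans (le_max_right _ _) (hmn δ)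
    rw [div_le_div_iff₀ ht'pos (hw n δ)] at h1
    have h2 : w n δ ≤ m n δ * t' := by linarith
    have h3 : m n δ * t' ≤ L δ * t' := mul_le_mul_of_nonneg_right (hLm δ) ht'pos.le
    linarith
  have hw3m : ∀ δ, 3 * w n δ ≤ m n δ := by
    intro δ
    have h1 : (3:ℝ) ≤ m n δ / w n δ := le_trans (le_max_left _ _) (hmn δ)
    rw [le_div_iff₀ (hw n δ)] at h1
    linarith
  have hqpu : ∀ δ, w n δ * ((q δ : ℝ) - p δ) ≤ L δ := by
    intro δ
    have e : w n δ * ((q δ : ℝ) - p δ) = w n δ * (q δ : ℝ) - w n δ * (p δ : ℝ) := by ring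
    rw [e, hL_def]
    have := hp1 δ; have := hq1 δ
    dsimp only
    linarith
  have hqpl : ∀ δ, L δ - 2 * w n δ ≤ w n δ * ((q δ : ℝ) - p δ) := by
    intro δ
    have e : w n δ * ((q δ : ℝ) - p δ) = w n δ * (q δ : ℝ) - w n δ * (p δ : ℝ) := by ring
    rw [e, hL_def]
    have := hp2 δ; have := hq2 δ
    dsimp only
    linarith
  have hpqz : ∀ δ, p δ + 1 ≤ q δ := by
    intro δ
    have h1 : w n δ * 1 ≤ w n δ * ((q δ : ℝ) - p δ) := by
      have := hqpl δ; have := hw3m δ; have := hLm δ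
      linarith
    have h2 : (1:ℝ) ≤ (q δ : ℝ) - p δ := le_of_mul_le_mul_left h1 (hw n δ)
    have h3 : ((p δ + 1 : ℤ) : ℝ) ≤ ((q δ : ℤ) : ℝ) := by push_cast; linarith
    exact_mod_cast h3
  -- the four index boxes
  set Kf := Fintype.piFinset (fun δ => Finset.Icc (p δ) (q δ)) with hKf_def
  set Gf := Fintype.piFinset (fun δ => Finset.Icc (p δ) (q δ - 1)) with hGf_def
  set If := Fintype.piFinset (fun δ => Finset.Icc (p δ + 1) (q δ - 1)) with hIf_def
  set Jf := Fintype.piFinset (fun δ => Finset.Icc (p δ - 1) (q δ)) with hJf_def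
  have hGK : Gf ⊆ Kf := by
    rw [hGf_def, hKf_def]
    exact Fintype.piFinset_subset _ _ fun δ => Finset.Icc_subset_Icc le_rfl (by omega)
  have hIJ : If ⊆ Jf := by
    rw [hIf_def, hJf_def]
    exact Fintype.piFinset_subset _ _ fun δ => Finset.Icc_subset_Icc (by omega) (by omega)
  have hgp_inj : Function.Injective gp := by
    intro k1 k2 h
    funext δ
    have h1 := congrFun h δ
    simp only [hgp_def] at h1
    have h2 : (k1 δ : ℝ) = k2 δ := mul_left_cancel₀ (hw n δ).ne' (by linarith)
    exact_mod_cast h2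
  have hgpB : ∀ k ∈ Kf, gp k ∈ B := by
    intro k hk
    rw [hKf_def] at hk
    rw [hB_def]
    refine Set.mem_univ_pi.mpr fun δ => ?_
    rw [Set.mem_Icc]
    have hkδ := Finset.mem_Icc.mp (Fintype.mem_piFinset.mp hk δ)
    have hc1 : (p δ : ℝ) ≤ (k δ : ℝ) := Int.cast_le.mpr hkδ.1
    have hc2 : (k δ : ℝ) ≤ (q δ : ℝ) := Int.cast_le.mpr hkδ.2
    have h1 := mul_le_mul_of_nonneg_left hc1 (hw n δ).le
    have h2 := mul_le_mul_of_nonneg_left hc2 (hw n δ).le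
    have := hp1 δ; have := hq1 δ
    have he : gp k δ = v n δ + w n δ * (k δ : ℝ) := by rw [hgp_def]
    rw [he]
    constructor <;> linarith
  have hgpB' : ∀ k ∈ If, gp k ∈ B' := by
    intro k hk
    rw [hIf_def] at hk
    rw [hB'_def]
    refine Set.mem_univ_pi.mpr fun δ => ?_
    rw [Set.mem_Ioo]
    have hkδ := Finset.mem_Icc.mp (Fintype.mem_piFinset.mp hk δ)
    have hc1 : ((p δ : ℝ) + 1) ≤ (k δ : ℝ) := by
      have : ((p δ + 1 : ℤ) : ℝ) ≤ ((k δ : ℤ) : ℝ) := Int.cast_le.mpr hkδ.1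
      push_cast at this; linarith
    have hc2 : (k δ : ℝ) ≤ (q δ : ℝ) - 1 := by
      have : ((k δ : ℤ) : ℝ) ≤ ((q δ - 1 : ℤ) : ℝ) := Int.cast_le.mpr hkδ.2
      push_cast at this; linarith
    have h1 := mul_le_mul_of_nonneg_left hc1 (hw n δ).le
    have h2 := mul_le_mul_of_nonneg_left hc2 (hw n δ).le
    have := hp1 δ; have := hq1 δ; have hwδ := hw n δ
    have he : gp k δ = v n δ + w n δ * (k δ : ℝ) := by rw [hgp_def]
    rw [he]
    constructor <;> nlinarith
  have hgpT : ∀ k ∈ Jf, gp k ∈ T := by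
    intro k hk
    rw [hJf_def] at hk
    apply hmemT
    intro δ
    have hkδ := Finset.mem_Icc.mp (Fintype.mem_piFinset.mp hk δ)
    have hc1 : ((p δ : ℝ) - 1) ≤ (k δ : ℝ) := by
      have : ((p δ - 1 : ℤ) : ℝ) ≤ ((k δ : ℤ) : ℝ) := Int.cast_le.mpr hkδ.1
      push_cast at this; linarith
    have hc2 : (k δ : ℝ) ≤ (q δ : ℝ) := Int.cast_le.mpr hkδ.2
    have h1 := mul_le_mul_of_nonneg_left hc1 (hw n δ).le
    have h2 := mul_le_mul_of_nonneg_left hc2 (hw n δ).le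
    have := hp1 δ; have := hq1 δ
    have hwδ1 : w n δ ≤ 1 := le_trans (hwn δ) hw₀le1
    have := hαa δ; have := hβb δ; have hwδ := hw n δ
    have he : gp k δ = v n δ + w n δ * (k δ : ℝ) := by rw [hgp_def]
    rw [he]
    constructor <;> nlinarith
  -- measure of B as a sum over grid points
  have hsingdisj : ∀ (F : Finset (Fin d → ℤ)), (↑F : Set (Fin d → ℤ)).PairwiseDisjoint
      (fun k => ({gp k} : Set (Fin d → ℝ))) := by
    intro F k1 _ k2 _ hne
    simp only [Function.onFun]
    exact Set.disjoint_singleton.mpr fun he => hne (hgp_inj he)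
  have hμBR : (μn n B).toReal = ∑ k ∈ Kf, (μn n {gp k}).toReal := by
    have h1 : μn n B = μn n (B ∩ {x : Fin d → ℝ | ∃ k : Fin d → ℤ, ∀ δ, x δ = v n δ + w n δ * (k δ : ℝ)}) :=
      (measure_inter_conull (hsupp n)).symm
    have h2 : B ∩ {x : Fin d → ℝ | ∃ k : Fin d → ℤ, ∀ δ, x δ = v n δ + w n δ * (k δ : ℝ)}
        = ⋃ k ∈ Kf, ({gp k} : Set (Fin d → ℝ)) := by
      ext x
      simp only [Set.mem_inter_iff, Set.mem_setOf_eq, Set.mem_iUnion, Set.mem_singleton_iff]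
      constructor
      · rintro ⟨hxB, k, hk⟩
        have hxeq : x = gp k := by
          funext δ
          rw [hgp_def]
          exact hk δ
        refine ⟨k, ?_, hxeq⟩
        rw [hKf_def]
        refine Fintype.mem_piFinset.mpr fun δ => ?_
        rw [Finset.mem_Icc]
        have hxδ1 : α δ ≤ x δ := (hxB δ (Set.mem_univ δ)).1
        have hxδ2 : x δ ≤ β δ := (hxB δ (Set.mem_univ δ)).2
        rw [hk δ] at hxδ1 hxδ2
        constructor
        · rw [hp_def]
          refine Int.ceil_le.mpr ?_
          rw [div_le_iff₀ (hw n δ)]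
          have e : (k δ : ℝ) * w n δ = w n δ * (k δ : ℝ) := mul_comm _ _
          linarith [e]
        · rw [hq_def]
          refine Int.le_floor.mpr ?_
          rw [le_div_iff₀ (hw n δ)]
          have e : (k δ : ℝ) * w n δ = w n δ * (k δ : ℝ) := mul_comm _ _
          linarith [e]
      · rintro ⟨k, hkK, rfl⟩
        exact ⟨hgpB k hkK, k, fun δ => by rw [hgp_def]⟩
    rw [h1, h2, measure_biUnion_finset (hsingdisj Kf) (fun k _ => measurableSet_singleton _)]
    exact ENNReal.toReal_sum fun k _ => measure_ne_top _ _
  have hμB'R : ∑ k ∈ If, (μn n {gp k}).toReal ≤ (μn n B').toReal := by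
    have he : μn n (⋃ k ∈ If, ({gp k} : Set (Fin d → ℝ))) = ∑ k ∈ If, μn n {gp k} :=
      measure_biUnion_finset (hsingdisj If) (fun k _ => measurableSet_singleton _)
    have hsub : (⋃ k ∈ If, ({gp k} : Set (Fin d → ℝ))) ⊆ B' :=
      Set.iUnion₂_subset fun k hk => Set.singleton_subset_iff.mpr (hgpB' k hk)
    have h1 : ∑ k ∈ If, (μn n {gp k}).toReal
        = (μn n (⋃ k ∈ If, ({gp k} : Set (Fin d → ℝ)))).toReal := by
      rw [he]
      exact (ENNReal.toReal_sum fun k _ => measure_ne_top _ _).symm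
    rw [h1]
    exact (ENNReal.toReal_le_toReal (measure_ne_top _ _) (measure_ne_top _ _)).mpr
      (measure_mono hsub)
  have hpt : ∀ k : Fin d → ℤ, |(μn n {gp k}).toReal - W * f (gp k)| ≤ W * (η/8) := by
    intro k
    have h := hLn k
    have he : (fun δ => v n δ + w n δ * (k δ : ℝ)) = gp k := by funext δ; rw [hgp_def]
    rw [he] at h
    have e2 : (μn n {gp k}).toReal - W * f (gp k)
        = W * ((μn n {gp k}).toReal / W - f (gp k)) := by
      field_simp
    rw [e2, abs_mul, abs_of_pos hWpos]
    exact mul_le_mul_of_nonneg_left h.le hWpos.le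
  -- cells
  set C : (Fin d → ℤ) → Set (Fin d → ℝ) :=
    fun k => Set.univ.pi fun δ => Set.Ico (gp k δ) (gp k δ + w n δ) with hC_def
  have hCmeas : ∀ k, MeasurableSet (C k) := fun k => by
    rw [hC_def]; exact MeasurableSet.univ_pi fun δ => measurableSet_Ico
  have hCvol : ∀ k, volume (C k) = ∏ δ, ENNReal.ofReal (w n δ) := by
    intro k
    rw [hC_def]
    dsimp only
    rw [volume_pi_pi]
    exact Finset.prod_congr rfl fun δ _ => by rw [Real.volume_Ico]; ring_nf
  have hCvolne : ∀ k, volume (C k) ≠ ⊤ := fun k => by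
    rw [hCvol]; exact ENNReal.prod_ne_top fun δ _ => ENNReal.ofReal_ne_top
  have hCvolR : ∀ k, (volume (C k)).toReal = W := by
    intro k
    rw [hCvol, ENNReal.toReal_prod, hW_def]
    exact Finset.prod_congr rfl fun δ _ => ENNReal.toReal_ofReal (hw n δ).le
  have hCdisj : ∀ k1 k2 : Fin d → ℤ, k1 ≠ k2 → Disjoint (C k1) (C k2) := by
    intro k1 k2 hne
    obtain ⟨δ, hδ⟩ := Function.ne_iff.mp hne
    rw [Set.disjoint_left]
    intro x hx1 hx2
    have h1 := hx1 δ (Set.mem_univ δ)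
    have h2 := hx2 δ (Set.mem_univ δ)
    rw [hgp_def] at h1 h2
    simp only [Set.mem_Ico] at h1 h2
    rcases lt_or_gt_of_ne hδ with hlt | hlt
    · have : ((k1 δ : ℝ) + 1) ≤ (k2 δ : ℝ) := by exact_mod_cast hlt
      have := mul_le_mul_of_nonneg_left this (hw n δ).le
      nlinarith [h1.1, h1.2, h2.1, h2.2]
    · have : ((k2 δ : ℝ) + 1) ≤ (k1 δ : ℝ) := by exact_mod_cast hlt
      have := mul_le_mul_of_nonneg_left this (hw n δ).le
      nlinarith [h1.1, h1.2, h2.1, h2.2]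
  have hCsubB : ∀ k ∈ Gf, C k ⊆ B := by
    intro k hk
    rw [hGf_def] at hk
    intro x hx
    rw [hB_def]
    refine Set.mem_univ_pi.mpr fun δ => ?_
    have hxδ := hx δ (Set.mem_univ δ)
    rw [hgp_def] at hxδ
    simp only [Set.mem_Ico] at hxδ
    have hkδ := Finset.mem_Icc.mp (Fintype.mem_piFinset.mp hk δ)
    have hc1 : (p δ : ℝ) ≤ (k δ : ℝ) := Int.cast_le.mpr hkδ.1
    have hc2 : (k δ : ℝ) ≤ (q δ : ℝ) - 1 := by
      have : ((k δ : ℤ) : ℝ) ≤ ((q δ - 1 : ℤ) : ℝ) := Int.cast_le.mpr hkδ.2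
      push_cast at this; linarith
    have h1 := mul_le_mul_of_nonneg_left hc1 (hw n δ).le
    have h2 := mul_le_mul_of_nonneg_left hc2 (hw n δ).le
    have := hp1 δ; have := hq1 δ
    rw [Set.mem_Icc]
    constructor
    · nlinarith [hxδ.1]
    · nlinarith [hxδ.2]
  have hBcover : B ⊆ ⋃ k ∈ Jf, C k := by
    intro x hx
    set k : Fin d → ℤ := fun δ => ⌊(x δ - v n δ)/(w n δ)⌋ with hk_def
    have hfl : ∀ δ, w n δ * (k δ : ℝ) ≤ x δ - v n δ := by
      intro δ
      have h := Int.floor_le ((x δ - v n δ)/(w n δ))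
      have h2 := mul_le_mul_of_nonneg_left h (hw n δ).le
      rwa [mul_div_cancel₀ _ (hw n δ).ne'] at h2
    have hfu : ∀ δ, x δ - v n δ < w n δ * ((k δ : ℝ) + 1) := by
      intro δ
      have h := Int.lt_floor_add_one ((x δ - v n δ)/(w n δ))
      have h2 := mul_lt_mul_of_pos_left h (hw n δ)
      rw [mul_div_cancel₀ _ (hw n δ).ne'] at h2
      calc x δ - v n δ < w n δ * ((⌊(x δ - v n δ)/(w n δ)⌋ : ℝ) + 1) := h2
        _ = w n δ * ((k δ : ℝ) + 1) := by rw [hk_def]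
    refine Set.mem_iUnion₂.mpr ⟨k, ?_, ?_⟩
    · rw [hJf_def]
      refine Fintype.mem_piFinset.mpr fun δ => ?_
      rw [Finset.mem_Icc]
      have hxδ1 : α δ ≤ x δ := (hx δ (Set.mem_univ δ)).1
      have hxδ2 : x δ ≤ β δ := (hx δ (Set.mem_univ δ)).2
      constructor
      · -- p δ - 1 ≤ k δ
        have h1 : α δ - v n δ < w n δ * ((k δ : ℝ) + 1) := by
          have := hfu δ; linarith
        have h2 : (α δ - v n δ)/(w n δ) < (k δ : ℝ) + 1 := by
          rw [div_lt_iff₀ (hw n δ)]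
          have e : ((k δ : ℝ) + 1) * w n δ = w n δ * ((k δ : ℝ) + 1) := mul_comm _ _
          linarith [e]
        have h3 : p δ ≤ k δ + 1 := by
          rw [hp_def]
          refine Int.ceil_le.mpr ?_
          push_cast
          linarith
        omega
      · -- k δ ≤ q δ
        rw [hq_def, hk_def]
        refine Int.floor_le_floor ?_
        gcongr
        all_goals first
          | exact (hw n δ).le
          | exact (hw n δ)
          | linarith
    · rw [hC_def]
      refine Set.mem_univ_pi.mpr fun δ => ?_
      rw [hgp_def]
      simp only [Set.mem_Ico]
      constructor
      · have := hfl δ; linarith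
      · have := hfu δ; nlinarith [hw n δ]
  -- uniform continuity on cells
  have hfy : ∀ (k : Fin d → ℤ) (y : Fin d → ℝ), gp k ∈ T → y ∈ T → y ∈ C k →
      |f y - f (gp k)| < η/8 := by
    intro k y hkT hyT hyC
    have hdist : dist y (gp k) < δ₀ := by
      have h1 : dist y (gp k) ≤ w₀ := by
        refine (dist_pi_le_iff hw₀pos.le).mpr fun δ => ?_
        have hyδ := hyC δ (Set.mem_univ δ)
        simp only [Set.mem_Ico] at hyδ
        rw [Real.dist_eq, abs_of_nonneg (by linarith [hyδ.1])]
        have := hwn δ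
        linarith [hyδ.2]
      linarith
    have := hδ₀ y hyT (gp k) hkT hdist
    rwa [Real.dist_eq] at this
  have hcell_lo : ∀ k ∈ Gf, W * (f (gp k) - η/8) ≤ ∫ x in C k, f x := by
    intro k hk
    have hconst : ∀ x ∈ C k, f (gp k) - η/8 ≤ f x := by
      intro x hx
      have h := hfy k x (hBT (hgpB k (hGK hk))) (hBT (hCsubB k hk hx)) hx
      rw [abs_lt] at h
      linarith [h.1]
    have h := setIntegral_ge_of_const_le_real (hCmeas k) (hCvolne k) hconst hf_int.integrableOn
    rw [measureReal_def, hCvolR k] at h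
    linarith [h]
  have hcell_hi : ∀ k ∈ Jf, ∫ x in B ∩ C k, f x ≤ W * (f (gp k) + η/8) := by
    intro k hk
    have hmeas : MeasurableSet (B ∩ C k) := hBmeas.inter (hCmeas k)
    have hvollt : volume (B ∩ C k) < ⊤ :=
      lt_of_le_of_lt (measure_mono Set.inter_subset_right)
        (lt_of_le_of_ne le_top (hCvolne k))
    have h1 : ∫ x in B ∩ C k, f x ≤ ∫ x in B ∩ C k, (f (gp k) + η/8) := by
      refine setIntegral_mono_on hf_int.integrableOn
        (integrableOn_const hvollt.ne) hmeas ?_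
      intro x hx
      have h := hfy k x (hgpT k hk) (hBT hx.1) hx.2
      rw [abs_lt] at h
      linarith [h.2]
    have h2 : ∫ x in B ∩ C k, ((f (gp k) + η/8) : ℝ) = (volume (B ∩ C k)).toReal * (f (gp k) + η/8) := by
      rw [setIntegral_const, smul_eq_mul, measureReal_def]
    have h3 : (volume (B ∩ C k)).toReal ≤ W := by
      rw [← hCvolR k]
      exact ENNReal.toReal_mono (hCvolne k) (measure_mono Set.inter_subset_right)
    have h4 : 0 ≤ f (gp k) + η/8 := by linarith [hf_nonneg (gp k)]
    calc ∫ x in B ∩ C k, f x ≤ (volume (B ∩ C k)).toReal * (f (gp k) + η/8) := by rw [← h2]; exact h1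
      _ ≤ W * (f (gp k) + η/8) := mul_le_mul_of_nonneg_right h3 h4
  have hGsum : ∑ k ∈ Gf, ∫ x in C k, f x ≤ A := by
    have h1 : ∫ x in ⋃ k ∈ Gf, C k, f x = ∑ k ∈ Gf, ∫ x in C k, f x :=
      integral_biUnion_finset Gf (fun k _ => hCmeas k)
        (fun k1 _ k2 _ hne => hCdisj k1 k2 hne) (fun k _ => hf_int.integrableOn)
    have h2 : (⋃ k ∈ Gf, C k) ⊆ B := Set.iUnion₂_subset hCsubB
    rw [← h1, hA_def]
    exact setIntegral_mono_set hf_int.integrableOn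
      (Filter.Eventually.of_forall hf_nonneg) (HasSubset.Subset.eventuallyLE h2)
  have hJsum : A = ∑ k ∈ Jf, ∫ x in B ∩ C k, f x := by
    have hBU : B = ⋃ k ∈ Jf, (B ∩ C k) := by
      apply Set.Subset.antisymm
      · intro x hx
        obtain ⟨k, hk, hxk⟩ := Set.mem_iUnion₂.mp (hBcover hx)
        exact Set.mem_iUnion₂.mpr ⟨k, hk, hx, hxk⟩
      · exact Set.iUnion₂_subset fun k hk => Set.inter_subset_left
    have h0 : A = ∫ x in ⋃ k ∈ Jf, (B ∩ C k), f x := by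
      rw [hA_def]
      exact congrArg (fun s => ∫ x in s, f x) hBU
    rw [h0]
    exact integral_biUnion_finset Jf (fun k _ => hBmeas.inter (hCmeas k))
      (fun k1 _ k2 _ hne => Disjoint.mono Set.inter_subset_right Set.inter_subset_right
        (hCdisj k1 k2 hne))
      (fun k _ => hf_int.integrableOn)
  -- counting
  have hWprod : ∀ F : Fin d → Finset ℤ,
      W * ((Fintype.piFinset F).card : ℝ) = ∏ δ, (w n δ * ((F δ).card : ℝ)) := by
    intro F
    rw [Fintype.card_piFinset, hW_def, Finset.prod_mul_distrib]
    push_cast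
    ring
  have hcardBound : ∀ F : Fin d → Finset ℤ,
      (∀ δ, (q δ:ℝ) - p δ - 1 ≤ ((F δ).card:ℝ) ∧ ((F δ).card:ℝ) ≤ (q δ:ℝ) - p δ + 2) →
      VB * (1-3*t')^d ≤ W * ((Fintype.piFinset F).card : ℝ) ∧
        W * ((Fintype.piFinset F).card : ℝ) ≤ VB * (1+2*t')^d := by
    intro F hF
    rw [hWprod]
    have ht3 : (0:ℝ) ≤ 1 - 3*t' := by linarith
    constructor
    · have he : VB * (1-3*t')^d = ∏ δ, (L δ * (1-3*t')) := by
        rw [Finset.prod_mul_distrib, Finset.prod_const, Finset.card_univ, Fintype.card_fin,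
          hVB_def]
      rw [he]
      refine Finset.prod_le_prod (fun δ _ => ?_) (fun δ _ => ?_)
      · exact mul_nonneg (hLpos δ).le ht3
      · have h1 : w n δ * ((q δ:ℝ) - p δ - 1) ≤ w n δ * ((F δ).card:ℝ) :=
          mul_le_mul_of_nonneg_left (hF δ).1 (hw n δ).le
        have h2 := hqpl δ
        have h3 := hwt δ
        nlinarith
    · have he : VB * (1+2*t')^d = ∏ δ, (L δ * (1+2*t')) := by
        rw [Finset.prod_mul_distrib, Finset.prod_const, Finset.card_univ, Fintype.card_fin,
          hVB_def]
      rw [he]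
      refine Finset.prod_le_prod (fun δ _ => ?_) (fun δ _ => ?_)
      · exact mul_nonneg (hw n δ).le (Nat.cast_nonneg _)
      · have h1 : w n δ * ((F δ).card:ℝ) ≤ w n δ * ((q δ:ℝ) - p δ + 2) :=
          mul_le_mul_of_nonneg_left (hF δ).2 (hw n δ).le
        have h2 := hqpu δ
        have h3 := hwt δ
        nlinarith
  have hbK : ∀ δ, (q δ:ℝ) - p δ - 1 ≤ ((Finset.Icc (p δ) (q δ)).card:ℝ) ∧
      ((Finset.Icc (p δ) (q δ)).card:ℝ) ≤ (q δ:ℝ) - p δ + 2 := by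
    intro δ
    rw [aux_card_Icc _ _ (by have := hpqz δ; omega)]
    constructor <;> linarith
  have hbG : ∀ δ, (q δ:ℝ) - p δ - 1 ≤ ((Finset.Icc (p δ) (q δ - 1)).card:ℝ) ∧
      ((Finset.Icc (p δ) (q δ - 1)).card:ℝ) ≤ (q δ:ℝ) - p δ + 2 := by
    intro δ
    rw [aux_card_Icc _ _ (by have := hpqz δ; omega)]
    push_cast
    constructor <;> linarith
  have hbI : ∀ δ, (q δ:ℝ) - p δ - 1 ≤ ((Finset.Icc (p δ + 1) (q δ - 1)).card:ℝ) ∧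
      ((Finset.Icc (p δ + 1) (q δ - 1)).card:ℝ) ≤ (q δ:ℝ) - p δ + 2 := by
    intro δ
    rw [aux_card_Icc _ _ (by have := hpqz δ; omega)]
    push_cast
    constructor <;> linarith
  have hbJ : ∀ δ, (q δ:ℝ) - p δ - 1 ≤ ((Finset.Icc (p δ - 1) (q δ)).card:ℝ) ∧
      ((Finset.Icc (p δ - 1) (q δ)).card:ℝ) ≤ (q δ:ℝ) - p δ + 2 := by
    intro δ
    rw [aux_card_Icc _ _ (by have := hpqz δ; omega)]
    push_cast
    constructor <;> linarith
  have hcK := hcardBound _ hbK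
  rw [← hKf_def] at hcK
  have hcG := hcardBound _ hbG
  rw [← hGf_def] at hcG
  have hcI := hcardBound _ hbI
  rw [← hIf_def] at hcI
  have hcJ := hcardBound _ hbJ
  rw [← hJf_def] at hcJ
  have h2VB : VB * (1+2*t')^d ≤ 2 * VB := by nlinarith
  have hdiffKG : W * (Kf.card:ℝ) - W * (Gf.card:ℝ) ≤ VB * (η/(2*M)) := by
    have h1 := hcK.2
    have h2 := hcG.1
    have h3 : VB * (1+2*t')^d - VB * (1-3*t')^d ≤ VB * (η/(2*M)) := by nlinarith
    linarith
  have hdiffJI : W * (Jf.card:ℝ) - W * (If.card:ℝ) ≤ VB * (η/(2*M)) := by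
    have h1 := hcJ.2
    have h2 := hcI.1
    have h3 : VB * (1+2*t')^d - VB * (1-3*t')^d ≤ VB * (η/(2*M)) := by nlinarith
    linarith
  -- numeric error bounds
  have hη8 : (0:ℝ) ≤ η/8 := by positivity
  have hxK2 : W * (Kf.card:ℝ) ≤ 2*VB := hcK.2.trans h2VB
  have hyG2 : W * (Gf.card:ℝ) ≤ 2*VB := hcG.2.trans h2VB
  have hxJ2 : W * (Jf.card:ℝ) ≤ 2*VB := hcJ.2.trans h2VB
  have hyI2 : W * (If.card:ℝ) ≤ 2*VB := hcI.2.trans h2VB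
  have hM0 : M ≠ 0 := hMpos.ne'
  have heq : VB * (η/(2*M)) * M = VB * (η/2) := by field_simp
  have e1 : (Kf.card:ℝ) * (W * (η/8)) ≤ VB * (η/4) := by
    have h := mul_le_mul_of_nonneg_right hxK2 hη8
    linarith [h]
  have e2 : (Gf.card:ℝ) * (W * (η/8)) ≤ VB * (η/4) := by
    have h := mul_le_mul_of_nonneg_right hyG2 hη8
    linarith [h]
  have e1' : (Jf.card:ℝ) * (W * (η/8)) ≤ VB * (η/4) := by
    have h := mul_le_mul_of_nonneg_right hxJ2 hη8
    linarith [h]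
  have e2' : (If.card:ℝ) * (W * (η/8)) ≤ VB * (η/4) := by
    have h := mul_le_mul_of_nonneg_right hyI2 hη8
    linarith [h]
  have e3 : ((Kf.card:ℝ) - (Gf.card:ℝ)) * (W * M) ≤ VB * (η/2) := by
    have h := mul_le_mul_of_nonneg_right hdiffKG hMpos.le
    linarith [h, heq]
  have e3' : ((Jf.card:ℝ) - (If.card:ℝ)) * (W * M) ≤ VB * (η/2) := by
    have h := mul_le_mul_of_nonneg_right hdiffJI hMpos.le
    linarith [h, heq]
  -- upper bound
  have s1 : (μn n B).toReal ≤ (∑ k ∈ Kf, W * f (gp k)) + (Kf.card:ℝ) * (W * (η/8)) := by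
    rw [hμBR]
    have hterm : ∀ k ∈ Kf, (μn n {gp k}).toReal ≤ W * f (gp k) + W * (η/8) := by
      intro k _
      have h := hpt k
      rw [abs_le] at h
      linarith [h.2]
    calc ∑ k ∈ Kf, (μn n {gp k}).toReal ≤ ∑ k ∈ Kf, (W * f (gp k) + W * (η/8)) :=
          Finset.sum_le_sum hterm
      _ = (∑ k ∈ Kf, W * f (gp k)) + (Kf.card:ℝ) * (W * (η/8)) := by
          rw [Finset.sum_add_distrib, Finset.sum_const, nsmul_eq_mul]
  have s2 : ∑ k ∈ Gf, W * f (gp k) ≤ A + (Gf.card:ℝ) * (W * (η/8)) := by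
    have hterm : ∀ k ∈ Gf, W * f (gp k) ≤ (∫ x in C k, f x) + W * (η/8) := by
      intro k hk
      have h := hcell_lo k hk
      linarith [h]
    calc ∑ k ∈ Gf, W * f (gp k) ≤ ∑ k ∈ Gf, ((∫ x in C k, f x) + W * (η/8)) :=
          Finset.sum_le_sum hterm
      _ = (∑ k ∈ Gf, ∫ x in C k, f x) + (Gf.card:ℝ) * (W * (η/8)) := by
          rw [Finset.sum_add_distrib, Finset.sum_const, nsmul_eq_mul]
      _ ≤ A + (Gf.card:ℝ) * (W * (η/8)) := by linarith [hGsum]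
  have s3 : ∑ k ∈ Kf \ Gf, W * f (gp k) ≤ ((Kf.card:ℝ) - (Gf.card:ℝ)) * (W * M) := by
    have hterm : ∀ k ∈ Kf \ Gf, W * f (gp k) ≤ W * M := by
      intro k hk
      exact mul_le_mul_of_nonneg_left
        (hfM _ (hBT (hgpB k (Finset.mem_sdiff.mp hk).1))) hWpos.le
    calc ∑ k ∈ Kf \ Gf, W * f (gp k) ≤ ((Kf \ Gf).card : ℝ) * (W * M) := by
          have h := Finset.sum_le_card_nsmul (Kf \ Gf) _ (W * M) hterm
          rwa [nsmul_eq_mul] at h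
      _ = ((Kf.card:ℝ) - (Gf.card:ℝ)) * (W * M) := by
          rw [Finset.card_sdiff_of_subset hGK, Nat.cast_sub (Finset.card_le_card hGK)]
  have s4 : ∑ k ∈ Kf, W * f (gp k)
      = (∑ k ∈ Kf \ Gf, W * f (gp k)) + ∑ k ∈ Gf, W * f (gp k) :=
    (Finset.sum_sdiff hGK).symm
  have hupper : (μn n B).toReal ≤ A + η * VB := by
    have := s1
    rw [s4] at this
    linarith [s2, s3, e1, e2, e3]
  -- lower bound
  have t1 : A ≤ (∑ k ∈ Jf, W * f (gp k)) + (Jf.card:ℝ) * (W * (η/8)) := by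
    rw [hJsum]
    calc ∑ k ∈ Jf, ∫ x in B ∩ C k, f x ≤ ∑ k ∈ Jf, (W * f (gp k) + W * (η/8)) := by
          refine Finset.sum_le_sum fun k hk => ?_
          have h := hcell_hi k hk
          linarith [h]
      _ = (∑ k ∈ Jf, W * f (gp k)) + (Jf.card:ℝ) * (W * (η/8)) := by
          rw [Finset.sum_add_distrib, Finset.sum_const, nsmul_eq_mul]
  have t2 : ∑ k ∈ Jf \ If, W * f (gp k) ≤ ((Jf.card:ℝ) - (If.card:ℝ)) * (W * M) := by
    have hterm : ∀ k ∈ Jf \ If, W * f (gp k) ≤ W * M := by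
      intro k hk
      exact mul_le_mul_of_nonneg_left
        (hfM _ (hgpT k (Finset.mem_sdiff.mp hk).1)) hWpos.le
    calc ∑ k ∈ Jf \ If, W * f (gp k) ≤ ((Jf \ If).card : ℝ) * (W * M) := by
          have h := Finset.sum_le_card_nsmul (Jf \ If) _ (W * M) hterm
          rwa [nsmul_eq_mul] at h
      _ = ((Jf.card:ℝ) - (If.card:ℝ)) * (W * M) := by
          rw [Finset.card_sdiff_of_subset hIJ, Nat.cast_sub (Finset.card_le_card hIJ)]
  have t3 : ∑ k ∈ If, W * f (gp k) ≤ (μn n B').toReal + (If.card:ℝ) * (W * (η/8)) := by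
    have hterm : ∀ k ∈ If, W * f (gp k) ≤ (μn n {gp k}).toReal + W * (η/8) := by
      intro k _
      have h := hpt k
      rw [abs_le] at h
      linarith [h.1]
    calc ∑ k ∈ If, W * f (gp k) ≤ ∑ k ∈ If, ((μn n {gp k}).toReal + W * (η/8)) :=
          Finset.sum_le_sum hterm
      _ = (∑ k ∈ If, (μn n {gp k}).toReal) + (If.card:ℝ) * (W * (η/8)) := by
          rw [Finset.sum_add_distrib, Finset.sum_const, nsmul_eq_mul]
      _ ≤ (μn n B').toReal + (If.card:ℝ) * (W * (η/8)) := by linarith [hμB'R]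
  have t4 : ∑ k ∈ Jf, W * f (gp k)
      = (∑ k ∈ Jf \ If, W * f (gp k)) + ∑ k ∈ If, W * f (gp k) :=
    (Finset.sum_sdiff hIJ).symm
  have hlower : A ≤ (μn n B').toReal + η * VB := by
    have := t1
    rw [t4] at this
    linarith [t2, t3, e1', e2', e3']
  -- conclusion
  have hμS_le : (μn n (Set.univ.pi S)).toReal ≤ A + η * VB :=
    le_trans ((ENNReal.toReal_le_toReal (measure_ne_top _ _) (measure_ne_top _ _)).mpr
      (measure_mono hSB)) hupper
  have hμS_ge : A - η * VB ≤ (μn n (Set.univ.pi S)).toReal := by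
    have h : (μn n B').toReal ≤ (μn n (Set.univ.pi S)).toReal :=
      (ENNReal.toReal_le_toReal (measure_ne_top _ _) (measure_ne_top _ _)).mpr
        (measure_mono hB'S)
    linarith [hlower, h]
  have hηVB : η * VB ≤ ε/2 * A := by
    have h1 : η * VB = ε/2 * (c * VB) := by rw [hη_def]; ring
    rw [h1]
    exact mul_le_mul_of_nonneg_left hcA (by positivity)
  rw [hint_eq]
  have h1 : (μn n (Set.univ.pi S)).toReal / A ≤ 1 + ε/2 := by
    rw [div_le_iff₀ hApos]
    linarith [hμS_le, hηVB]
  have h2 : 1 - ε/2 ≤ (μn n (Set.univ.pi S)).toReal / A := by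
    rw [le_div_iff₀ hApos]
    linarith [hμS_ge, hηVB]
  have h3 : |(μn n (Set.univ.pi S)).toReal / A - 1| ≤ ε/2 :=
    abs_le.mpr ⟨by linarith, by linarith⟩
  linarith
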